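/- For an admissible warping path π between two sequences of equal length L, the quantity WPD_d(π) = (√2/(2·|π|))·Σ_k |π_{k,1} − π_{k,2}| satisfies 0 ≤ WPD_d(π) ≤ (√2/4)·(L+1). -/

import Mathlib

/-- A single admissible step of a warping path: each coordinate stays or
increases by one, and not both stay. -/
def WarpStep (p q : ℕ × ℕ) : Prop :=
  (q.1 = p.1 ∨ q.1 = p.1 + 1) ∧ (q.2 = p.2 ∨ q.2 = p.2 + 1) ∧ q ≠ p

/-- An admissible warping path between two sequences of length `L`. -/
def IsAdmissible (L : ℕ) (π : List (ℕ × ℕ)) : Prop :=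
  π.head? = some (0, 0) ∧ π.getLast? = some (L - 1, L - 1) ∧ π.Chain' WarpStep

/-- The warping path diversity of a path. -/
noncomputable def WPDd (π : List (ℕ × ℕ)) : ℝ :=
  Real.sqrt 2 / (2 * π.length) * (π.map fun p => |(p.1 : ℝ) - (p.2 : ℝ)|).sum

lemma sum_map_eq_range {α : Type*} (f : α → ℝ) (d : α) :
    ∀ (l : List α), (l.map f).sum = ∑ k ∈ Finset.range l.length, f (l.getD k d)
  | [] => by simp
  | a :: l => by
    rw [List.map_cons, List.sum_cons, List.length_cons, Finset.sum_range_succ']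
    simp [sum_map_eq_range f d l, add_comm]

lemma minsum_le : ∀ m : ℕ, 4 * ∑ k ∈ Finset.range (m + 1), min k (m - k) ≤ m * m
  | 0 => by simp
  | 1 => by decide
  | (m + 2) => by
    have key : ∑ k ∈ Finset.range (m + 3), min k (m + 2 - k)
        = (∑ k ∈ Finset.range (m + 1), min k (m - k)) + (m + 1) := by
      rw [Finset.sum_range_succ']
      rw [Finset.sum_range_succ]
      have h1 : min (m + 1 + 1) (m + 2 - (m + 1 + 1)) = 0 := by omega
      have h2 : min 0 (m + 2 - 0) = 0 := by omega
      rw [h1, h2, add_zero, add_zero]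
      have hcong : ∀ k ∈ Finset.range (m + 1),
          (k + 1) ⊓ (m + 2 - (k + 1)) = k ⊓ (m - k) + 1 := by
        intro k hk
        have hk' : k ≤ m := by simpa [Nat.lt_succ_iff] using hk
        omega
      rw [Finset.sum_congr rfl hcong, Finset.sum_add_distrib]
      simp
    have ih := minsum_le m
    rw [key]
    have hm2 : (m + 2) * (m + 2) = m * m + 4 * m + 4 := by ring
    omega

theorem wpd_bounds (L : ℕ) (hL : 1 ≤ L) (π : List (ℕ × ℕ))
    (hπ : IsAdmissible L π) :
    0 ≤ WPDd π ∧ WPDd π ≤ Real.sqrt 2 / 4 * (L + 1) := by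
  obtain ⟨hhead, hlast, hchain⟩ := hπ
  have hne : π ≠ [] := by
    intro h; rw [h] at hhead; simp at hhead
  set n := π.length with hn
  have hn1 : 1 ≤ n := List.length_pos_iff.mpr hne
  set g : ℕ → ℕ × ℕ := fun k => π.getD k (0, 0) with hgdef
  have hgk : ∀ k, π.getD k (0, 0) = g k := fun _ => rfl
  set d : ℕ → ℤ := fun k => ((g k).1 : ℤ) - ((g k).2 : ℤ) with hddef
  set s : ℕ → ℤ := fun k => ((g k).1 : ℤ) + ((g k).2 : ℤ) with hsdef
  have hg0 : g 0 = (0, 0) := by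
    have h := List.head?_eq_head hne
    rw [hhead] at h
    rw [hgdef]
    simp only
    rw [List.getD_eq_getElem _ _ (by omega : 0 < π.length), List.getElem_zero]
    exact (Option.some_injective _ h.symm)
  have hglast : g (n - 1) = (L - 1, L - 1) := by
    have h1 := List.getLast?_eq_getLast_of_ne_nil hne
    rw [hlast] at h1
    rw [hgdef]
    simp only
    rw [List.getD_eq_getElem _ _ (by omega : n - 1 < π.length),
      ← List.getLast_eq_getElem hne]
    exact (Option.some_injective _ h1.symm)
  have hstep : ∀ k, k + 1 < n → WarpStep (g k) (g (k + 1)) := by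
    intro k hk
    have h := List.isChain_iff_getElem.mp hchain k (by omega)
    have e1 : g k = π.get ⟨k, by omega⟩ := List.getD_eq_get π (0, 0) ⟨k, by omega⟩
    have e2 : g (k + 1) = π.get ⟨k + 1, by omega⟩ := List.getD_eq_get π (0, 0) ⟨k + 1, by omega⟩
    rw [e1, e2]; exact h
  have hd : ∀ k, k + 1 < n →
      (d k - 1 ≤ d (k + 1) ∧ d (k + 1) ≤ d k + 1) ∧ s k + 1 ≤ s (k + 1) := by
    intro k hk
    obtain ⟨h1, h2, h3⟩ := hstep k hk
    have h4 : (g (k + 1)).1 ≠ (g k).1 ∨ (g (k + 1)).2 ≠ (g k).2 := by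
      by_contra h
      push_neg at h
      exact h3 (Prod.ext h.1 h.2)
    simp only [hddef, hsdef]
    omega
  have hfor : ∀ k, k < n → |d k| ≤ (k : ℤ) := by
    intro k
    induction k with
    | zero => intro _; simp [hddef, hg0]
    | succ k ih =>
      intro hk
      have h := (hd k hk).1
      have h2 := ih (by omega)
      rw [abs_le] at h2 ⊢
      push_cast
      omega
  have hback : ∀ j, j ≤ n - 1 → |d (n - 1 - j)| ≤ (j : ℤ) := by
    intro j
    induction j with
    | zero => intro _; simp [hddef, hglast]
    | succ j ih =>
      intro hj
      have e : n - 1 - (j + 1) + 1 = n - 1 - j := by omega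
      have hk : n - 1 - (j + 1) + 1 < n := by omega
      have h := (hd (n - 1 - (j + 1)) hk).1
      rw [e] at h
      have h2 := ih (by omega)
      rw [abs_le] at h2 ⊢
      push_cast
      omega
  have hsk : ∀ k, k < n → (k : ℤ) ≤ s k := by
    intro k
    induction k with
    | zero => intro _; simp [hsdef, hg0]
    | succ k ih =>
      intro hk
      have h := (hd k hk).2
      have h2 := ih (by omega)
      push_cast
      omega
  have hnL : n ≤ 2 * L - 1 := by
    have h1 := hsk (n - 1) (by omega)
    have h2 : s (n - 1) = ((L - 1 : ℕ) : ℤ) + ((L - 1 : ℕ) : ℤ) := by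
      simp [hsdef, hglast]
    rw [h2] at h1
    omega
  have hmin : ∀ k ∈ Finset.range n, |d k| ≤ ((min k (n - 1 - k) : ℕ) : ℤ) := by
    intro k hk
    rw [Finset.mem_range] at hk
    have h1 := hfor k hk
    have h2 := hback (n - 1 - k) (by omega)
    have e : n - 1 - (n - 1 - k) = k := by omega
    rw [e] at h2
    omega
  have hZ1 : (4 : ℤ) * ∑ k ∈ Finset.range n, |d k| ≤ (((n - 1) * (n - 1) : ℕ) : ℤ) := by
    have hsumZ : ∑ k ∈ Finset.range n, |d k|
        ≤ ((∑ k ∈ Finset.range n, min k (n - 1 - k) : ℕ) : ℤ) := by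
      rw [Nat.cast_sum]
      exact Finset.sum_le_sum hmin
    have hsumN := minsum_le (n - 1)
    rw [show n - 1 + 1 = n by omega] at hsumN
    calc (4 : ℤ) * ∑ k ∈ Finset.range n, |d k|
        ≤ 4 * ((∑ k ∈ Finset.range n, min k (n - 1 - k) : ℕ) : ℤ) := by linarith
      _ = ((4 * ∑ k ∈ Finset.range n, min k (n - 1 - k) : ℕ) : ℤ) := by push_cast; ring
      _ ≤ (((n - 1) * (n - 1) : ℕ) : ℤ) := by exact_mod_cast hsumN
  have hS : (π.map fun p => |(p.1 : ℝ) - (p.2 : ℝ)|).sum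
      = ∑ k ∈ Finset.range n, ((|d k| : ℤ) : ℝ) := by
    rw [sum_map_eq_range _ (0, 0)]
    refine Finset.sum_congr rfl fun k _ => ?_
    rw [hgk k]
    simp only [hddef]
    push_cast
    rfl
  have hS4 : 4 * (π.map fun p => |(p.1 : ℝ) - (p.2 : ℝ)|).sum
      ≤ ((n : ℝ) - 1) * ((n : ℝ) - 1) := by
    rw [hS]
    have : (((n - 1) * (n - 1) : ℕ) : ℝ) = ((n : ℝ) - 1) * ((n : ℝ) - 1) := by
      push_cast [Nat.cast_sub hn1]
      ring
    rw [← this]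
    exact_mod_cast hZ1
  have hS0 : 0 ≤ (π.map fun p => |(p.1 : ℝ) - (p.2 : ℝ)|).sum := by
    rw [hS]; positivity
  constructor
  · unfold WPDd
    apply mul_nonneg _ hS0
    positivity
  · unfold WPDd
    have hnR : (1 : ℝ) ≤ (n : ℝ) := by exact_mod_cast hn1
    have hLR : (1 : ℝ) ≤ (L : ℝ) := by exact_mod_cast hL
    have hLn : (n : ℝ) ≤ 2 * (L : ℝ) - 1 := by
      have h : ((n : ℕ) : ℝ) ≤ ((2 * L - 1 : ℕ) : ℝ) := Nat.cast_le.mpr hnL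
      rw [Nat.cast_sub (by omega : 1 ≤ 2 * L)] at h
      push_cast at h
      linarith
    have key : 2 * (π.map fun p => |(p.1 : ℝ) - (p.2 : ℝ)|).sum ≤ (n : ℝ) * ((L : ℝ) + 1) := by
      nlinarith [mul_le_mul_of_nonneg_left hLn (by linarith : (0 : ℝ) ≤ (n : ℝ) - 1)]
    rw [div_mul_eq_mul_div, div_le_iff₀ (by positivity : (0 : ℝ) < 2 * (n : ℝ))]
    calc Real.sqrt 2 * (π.map fun p => |(p.1 : ℝ) - (p.2 : ℝ)|).sum
        ≤ Real.sqrt 2 * ((n : ℝ) * ((L : ℝ) + 1) / 2) :=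
          mul_le_mul_of_nonneg_left (by linarith) (Real.sqrt_nonneg 2)
      _ = Real.sqrt 2 / 4 * ((L : ℝ) + 1) * (2 * (n : ℝ)) := by ring
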